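/- (Converse direction of Moulin's theorem.) Let N be a finite set of voters and let f be a strategy-proof and neutral rule. Then there exists an M-winning coalition set 𝒞 on N such that f is the M-winning coalition rule associated with 𝒞, i.e., for every profile R and every x : Bool, f R = x if and only if some C ∈ 𝒞 satisfies R i = x for all i ∈ C. -/
import Mathlib


/-- A rule is strategy-proof if whenever a voter's misreport would give his true
preference, truthful reporting gives it as well. -/
def StrategyProof {N : Type*} [DecidableEq N] (f : (N → Bool) → Bool) : Prop :=
  ∀ (R : N → Bool) (i : N) (b : Bool), f (Function.update R i b) = R i → f R = R i

/-- A rule is neutral if it commutes with flipping the two candidates. -/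
def Neutral {N : Type*} (f : (N → Bool) → Bool) : Prop :=
  ∀ R : N → Bool, f (fun i => !(R i)) = !(f R)

/-- An M-winning coalition set: nonempty, members nonempty, minimality (P1),
and Moulin's property (P2). -/
def IsMWCS {N : Type*} [DecidableEq N] (𝒞 : Set (Finset N)) : Prop :=
  𝒞.Nonempty ∧ (∀ C ∈ 𝒞, C.Nonempty) ∧
    (∀ C ∈ 𝒞, ∀ C' ∈ 𝒞, C ⊆ C' → C = C') ∧
    (∀ C : Finset N, (∃ C' ∈ 𝒞, C' ⊆ C) ↔ ∀ C'' ∈ 𝒞, (C ∩ C'').Nonempty)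

/-- `f` is the M-winning coalition rule associated with `𝒞`. -/
def IsMWCRule {N : Type*} (𝒞 : Set (Finset N)) (f : (N → Bool) → Bool) : Prop :=
  ∀ (R : N → Bool) (x : Bool), f R = x ↔ ∃ C ∈ 𝒞, ∀ i ∈ C, R i = x

/-- `g` is the sequential unanimity rule associated with the sequence `S`. -/
def IsSURule {N : Type*} {K : ℕ} (S : Fin K → Finset N) (g : (N → Bool) → Bool) : Prop :=
  ∀ (R : N → Bool) (x : Bool),
    g R = x ↔ ∃ k : Fin K, (∀ i ∈ S k, R i = x) ∧
      ∀ l < k, ∃ i ∈ S l, ∃ j ∈ S l, R i ≠ R j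

/-- Converse direction of Moulin's theorem: every strategy-proof and neutral rule is the
M-winning coalition rule associated with some M-winning coalition set. -/
theorem stmt3 {N : Type*} [Fintype N] [DecidableEq N] (f : (N → Bool) → Bool)
    (hSP : StrategyProof f) (hN : Neutral f) :
    ∃ 𝒞 : Set (Finset N), IsMWCS 𝒞 ∧ IsMWCRule 𝒞 f := by
  classical
  -- monotonicity from strategy-proofness
  have mono0 : ∀ (s : Finset N) (R R' : N → Bool), (∀ i, R i = true → R' i = true) →
      (∀ i, i ∉ s → R i = R' i) → f R = true → f R' = true := by
    intro s
    induction s using Finset.strongInductionOn with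
    | _ s ih =>
      intro R R' hle hout hf
      rcases s.eq_empty_or_nonempty with rfl | ⟨a, ha⟩
      · have : R = R' := funext fun i => hout i (Finset.notMem_empty i)
        rwa [← this]
      · set R'' := Function.update R a (R' a) with hR''
        have hf'' : f R'' = true := by
          by_cases hc : R a = R' a
          · rw [hR'', ← hc, Function.update_eq_self]; exact hf
          · have hRa : R a = false := by
              cases hRa : R a
              · rfl
              · exact absurd (hle a hRa) (by rw [hRa] at hc; exact fun h => hc h.symm)
            have hR'a : R' a = true := by
              cases hR'a : R' a
              · rw [hRa, hR'a] at hc; exact absurd rfl hc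
              · rfl
            have h1 : Function.update R'' a false = R := by
              rw [hR'', Function.update_idem, ← hRa, Function.update_eq_self]
            have h2 : R'' a = true := by rw [hR'', Function.update_self, hR'a]
            have key : f R'' = R'' a :=
              hSP R'' a false (by rw [h1, h2]; exact hf)
            rw [key, h2]
        have hss : s.erase a ⊂ s := Finset.erase_ssubset ha
        refine ih (s.erase a) hss R'' R' ?_ ?_ hf''
        · intro i hi
          by_cases hia : i = a
          · subst hia; rwa [hR'', Function.update_self] at hi
          · rw [hR'', Function.update_of_ne hia] at hi; exact hle i hi
        · intro i hi
          by_cases hia : i = a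
          · subst hia; rw [hR'', Function.update_self]
          · rw [hR'', Function.update_of_ne hia]
            exact hout i (fun h => hi (Finset.mem_erase.mpr ⟨hia, h⟩))
  have monoF : ∀ (R R' : N → Bool), (∀ i, R i = true → R' i = true) →
      f R = true → f R' = true := fun R R' h =>
    mono0 Finset.univ R R' h (fun i hi => absurd (Finset.mem_univ i) hi)
  -- characteristic functions and winning coalitions
  set χ : Finset N → N → Bool := fun C i => decide (i ∈ C) with hχ
  set Win : Finset N → Prop := fun C => f (χ C) = true with hWin
  have Wup : ∀ {C C' : Finset N}, C ⊆ C' → Win C → Win C' := by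
    intro C C' hsub hC
    exact monoF (χ C) (χ C') (fun i hi => by
      simp only [hχ, decide_eq_true_iff] at hi ⊢; exact hsub hi) hC
  have hcompl : ∀ C : Finset N, f (χ Cᶜ) = !(f (χ C)) := by
    intro C
    have : χ Cᶜ = fun i => !(χ C i) := by
      funext i; simp [hχ, Finset.mem_compl]
    rw [this]; exact hN (χ C)
  have hUniv : Win Finset.univ := by
    have hconst : χ Finset.univ = fun _ => true := by funext i; simp [hχ]
    by_contra h
    have ht : f (χ Finset.univ) = false := by
      cases hv : f (χ Finset.univ)
      · rfl
      · exact absurd hv h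
    have he : f (χ (Finset.univ : Finset N)ᶜ) = true := by rw [hcompl, ht]; rfl
    have := monoF (χ (Finset.univ : Finset N)ᶜ) (χ Finset.univ)
      (fun i _ => by rw [hconst]) he
    rw [ht] at this
    exact Bool.false_ne_true this
  have hEmpty : ¬ Win (∅ : Finset N) := by
    intro h
    have h2 : f (χ (∅ : Finset N)ᶜ) = true := by
      rw [Finset.compl_empty]; exact hUniv
    have h3 := hcompl (∅ : Finset N)
    rw [h2, h] at h3
    simp at h3
  set 𝒞 : Set (Finset N) := {C | Win C ∧ ∀ C', Win C' → C' ⊆ C → C' = C} with h𝒞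
  have hmem : ∀ C : Finset N, C ∈ 𝒞 ↔ Win C ∧ ∀ C', Win C' → C' ⊆ C → C' = C := by
    intro C; rw [h𝒞]; exact Iff.rfl
  have hsubW : ∀ C ∈ 𝒞, Win C := fun C hC => ((hmem C).mp hC).1
  have exmin : ∀ C : Finset N, Win C → ∃ C' ∈ 𝒞, C' ⊆ C := by
    intro C
    induction C using Finset.strongInductionOn with
    | _ C ih =>
      intro hC
      by_cases h : ∀ C', Win C' → C' ⊆ C → C' = C
      · exact ⟨C, (hmem C).mpr ⟨hC, h⟩, subset_rfl⟩
      · push_neg at h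
        obtain ⟨C', hC'W, hsub, hne⟩ := h
        obtain ⟨D, hD, hDs⟩ := ih C' (lt_of_le_of_ne hsub hne) hC'W
        exact ⟨D, hD, hDs.trans hsub⟩
  have hWchar : ∀ C : Finset N, Win C ↔ ∃ C' ∈ 𝒞, C' ⊆ C := by
    intro C
    constructor
    · exact exmin C
    · rintro ⟨C', hC', hsub⟩; exact Wup hsub (hsubW C' hC')
  -- f R = true iff a coalition unanimously votes true
  have htrue : ∀ R : N → Bool, f R = true ↔ ∃ C ∈ 𝒞, ∀ i ∈ C, R i = true := by
    intro R
    set CR : Finset N := Finset.univ.filter (fun i => R i = true) with hCR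
    have hRχ : R = χ CR := by
      funext i
      simp only [hχ, hCR, Finset.mem_filter, Finset.mem_univ, true_and]
      cases h : R i <;> simp [h]
    have h1 : f R = true ↔ Win CR := by rw [hWin, hRχ]
    rw [h1, hWchar]
    constructor
    · rintro ⟨C', hC', hsub⟩
      refine ⟨C', hC', fun i hi => ?_⟩
      have := hsub hi
      rw [hCR, Finset.mem_filter] at this
      exact this.2
    · rintro ⟨C', hC', hall⟩
      refine ⟨C', hC', fun i hi => ?_⟩
      rw [hCR, Finset.mem_filter]
      exact ⟨Finset.mem_univ i, hall i hi⟩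
  refine ⟨𝒞, ⟨?_, ?_, ?_, ?_⟩, ?_⟩
  · obtain ⟨C, hC, _⟩ := exmin Finset.univ hUniv
    exact ⟨C, hC⟩
  · intro C hC
    rw [Finset.nonempty_iff_ne_empty]
    rintro rfl
    exact hEmpty (hsubW _ hC)
  · intro C hC C' hC' hsub
    exact ((hmem C').mp hC').2 C (hsubW C hC) hsub
  · intro C
    constructor
    · rintro ⟨C', hC', hsub⟩ C'' hC''
      rw [Finset.nonempty_iff_ne_empty]
      intro hint
      have hsub2 : C'' ⊆ Cᶜ := by
        intro i hi
        rw [Finset.mem_compl]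
        intro hiC
        have : i ∈ C ∩ C'' := Finset.mem_inter.mpr ⟨hiC, hi⟩
        rw [hint] at this
        exact Finset.notMem_empty i this
      have h1 : Win Cᶜ := Wup hsub2 (hsubW _ hC'')
      have h2 : Win C := Wup hsub (hsubW _ hC')
      rw [hWin] at h1 h2
      have h3 := hcompl C
      rw [h1, h2] at h3
      simp at h3
    · intro hall
      apply (hWchar C).mp
      by_contra hC
      have hCc : f (χ C) = false := by
        cases hv : f (χ C)
        · rfl
        · exact absurd hv hC
      have h1 : Win Cᶜ := by rw [hWin]; show f (χ Cᶜ) = true; rw [hcompl, hCc]; rfl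
      obtain ⟨C'', hC'', hsub⟩ := exmin Cᶜ h1
      obtain ⟨i, hi⟩ := hall C'' hC''
      rw [Finset.mem_inter] at hi
      have := hsub hi.2
      rw [Finset.mem_compl] at this
      exact this hi.1
  · intro R x
    cases x with
    | true => exact htrue R
    | false =>
      have hneg : f R = false ↔ f (fun i => !(R i)) = true := by
        rw [hN R]; simp
      rw [hneg, htrue]
      constructor
      · rintro ⟨C, hC, hall⟩
        refine ⟨C, hC, fun i hi => ?_⟩
        have := hall i hi
        cases h : R i
        · rfl
        · rw [h] at this; simp at this
      · rintro ⟨C, hC, hall⟩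
        refine ⟨C, hC, fun i hi => ?_⟩
        rw [hall i hi]
        rfl
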